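/- Fix an integer N ≥ 3 with node indices j ∈ ℤ/Nℤ. Let X_j : ℝ → ℝ², V_j : ℝ → ℝ, κ_j : ℝ → ℝ (j ∈ ℤ/Nℤ) be continuously differentiable functions of time t, with segment vectors h_j(t) := X_j(t) − X_{j−1}(t) ≠ 0 for all t and per-segment unit normals n_j(t) := −h_j(t)^⊥/‖h_j(t)‖, where (u₁,u₂)^⊥ := (−u₂,u₁). Suppose that, for every t, the semi-discrete scheme holds: (S1) for every φ : ℤ/Nℤ → ℝ, ∑_j ‖h_j‖ [ (n_j·X'_{j−1}) φ_{j−1} + (n_j·X'_j) φ_j ] = ∑_j ‖h_j‖ [ V_{j−1} φ_{j−1} + V_j φ_j ]; (S2) for every ω : ℤ/Nℤ → ℝ², (1/2)∑_j ‖h_j‖ [ V_{j−1}(n_j·ω_{j−1}) + V_j(n_j·ω_j) ] = ∑_j (1/‖h_j‖) [ −(κ_j − κ_{j−1}) n_j + ((κ_{j−1}² + κ_j²)/4) h_j ] · (ω_j − ω_{j−1}); (S3) for every ψ : ℤ/Nℤ → ℝ, (1/2)∑_j ‖h_j‖ [ κ'_{j−1} ψ_{j−1} + κ'_j ψ_j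 ] = ∑_j (1/‖h_j‖) ( n_j·(X'_j − X'_{j−1}) )(ψ_j − ψ_{j−1}) − (1/2)∑_j (1/‖h_j‖) ( h_j·(X'_j − X'_{j−1}) ) [ κ_{j−1} ψ_{j−1} + κ_j ψ_j ]. Then the discretized Willmore energy W^h(t) := (1/4)∑_j ‖h_j(t)‖ ( κ_{j−1}(t)² + κ_j(t)² ) satisfies d/dt W^h(t) = −(1/2)∑_j ‖h_j(t)‖ ( V_{j−1}(t)² + V_j(t)² ) ≤ 0; in particular W^h(t) ≤ W^h(t') for all t ≥ t'. (Theorem 3.1, semi-discrete energy dissipation) -/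

import Mathlib

noncomputable section

/-- The plane `ℝ²` with the Euclidean norm. -/
abbrev E2 : Type := EuclideanSpace ℝ (Fin 2)

/-- Clockwise-rotation convention: `(u₁, u₂)^⊥ = (−u₂, u₁)`. -/
def perp (u : E2) : E2 := (WithLp.equiv 2 (Fin 2 → ℝ)).symm ![-(u 1), u 0]

theorem hasDerivAt_norm_aux {f : ℝ → E2} {f' : E2} {x : ℝ}
    (hf : HasDerivAt f f' x) (h0 : f x ≠ 0) :
    HasDerivAt (fun t => ‖f t‖) (‖f x‖⁻¹ * (inner ℝ (f x) f' : ℝ)) x := by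
  have hsq : HasDerivAt (fun t => ‖f t‖ ^ 2) (2 * (inner ℝ (f x) f' : ℝ)) x := hf.norm_sq
  have h2 : HasDerivAt (fun t => Real.sqrt (‖f t‖ ^ 2))
      ((2 * (inner ℝ (f x) f' : ℝ)) / (2 * Real.sqrt (‖f x‖ ^ 2))) x :=
    hsq.sqrt (pow_ne_zero _ (norm_ne_zero_iff.mpr h0))
  have heq : (fun t => Real.sqrt (‖f t‖ ^ 2)) = fun t => ‖f t‖ := by
    funext t; rw [Real.sqrt_sq (norm_nonneg _)]
  rw [heq] at h2
  convert h2 using 1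
  rw [Real.sqrt_sq (norm_nonneg _)]
  have : ‖f x‖ ≠ 0 := norm_ne_zero_iff.mpr h0
  field_simp

/-- Theorem 3.1 (semi-discrete energy dissipation): if the nodal data
`(X_j, V_j, κ_j)` of a polygonal curve satisfy the semi-discrete scheme
(S1)-(S3) for all times, then the discretized Willmore energy
`W^h(t) = (1/4)∑_j ‖h_j‖(κ_{j−1}² + κ_j²)` satisfies
`d/dt W^h = −(1/2)∑_j ‖h_j‖(V_{j−1}² + V_j²) ≤ 0`; in particular `W^h` is
non-increasing. -/
theorem semidiscrete_energy_dissipation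
    (N : ℕ) [NeZero N] (hN : 3 ≤ N)
    (X : ZMod N → ℝ → E2) (V κ : ZMod N → ℝ → ℝ)
    (hX : ∀ j, ContDiff ℝ 1 (X j)) (hV : ∀ j, ContDiff ℝ 1 (V j))
    (hκ : ∀ j, ContDiff ℝ 1 (κ j))
    (h : ZMod N → ℝ → E2) (hdef : ∀ j t, h j t = X j t - X (j-1) t)
    (hne : ∀ j t, h j t ≠ 0)
    (n : ZMod N → ℝ → E2) (ndef : ∀ j t, n j t = -(‖h j t‖⁻¹ • perp (h j t)))
    (S1 : ∀ t : ℝ, ∀ φ : ZMod N → ℝ,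
      ∑ j, ‖h j t‖ * ((inner ℝ (n j t) (deriv (X (j-1)) t) : ℝ) * φ (j-1)
          + (inner ℝ (n j t) (deriv (X j) t) : ℝ) * φ j)
        = ∑ j, ‖h j t‖ * (V (j-1) t * φ (j-1) + V j t * φ j))
    (S2 : ∀ t : ℝ, ∀ ω : ZMod N → E2,
      (1/2) * ∑ j, ‖h j t‖ * (V (j-1) t * (inner ℝ (n j t) (ω (j-1)) : ℝ)
          + V j t * (inner ℝ (n j t) (ω j) : ℝ))
        = ∑ j, ‖h j t‖⁻¹ *
            (inner ℝ (-(κ j t - κ (j-1) t) • n j t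
                + ((κ (j-1) t ^ 2 + κ j t ^ 2)/4) • h j t) (ω j - ω (j-1)) : ℝ))
    (S3 : ∀ t : ℝ, ∀ ψ : ZMod N → ℝ,
      (1/2) * ∑ j, ‖h j t‖ * (deriv (κ (j-1)) t * ψ (j-1) + deriv (κ j) t * ψ j)
        = ∑ j, ‖h j t‖⁻¹ * (inner ℝ (n j t) (deriv (X j) t - deriv (X (j-1)) t) : ℝ)
              * (ψ j - ψ (j-1))
          - (1/2) * ∑ j, ‖h j t‖⁻¹
              * (inner ℝ (h j t) (deriv (X j) t - deriv (X (j-1)) t) : ℝ)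
              * (κ (j-1) t * ψ (j-1) + κ j t * ψ j))
    (W : ℝ → ℝ)
    (Wdef : W = fun t => (1/4) * ∑ j, ‖h j t‖ * (κ (j-1) t ^ 2 + κ j t ^ 2)) :
    (∀ t : ℝ,
      HasDerivAt W (-(1/2) * ∑ j, ‖h j t‖ * (V (j-1) t ^ 2 + V j t ^ 2)) t) ∧
    (∀ t : ℝ, (-(1/2) * ∑ j, ‖h j t‖ * (V (j-1) t ^ 2 + V j t ^ 2)) ≤ 0) ∧
    (∀ t t' : ℝ, t' ≤ t → W t ≤ W t') := by
  have hpart1 : ∀ t : ℝ,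
      HasDerivAt W (-(1/2) * ∑ j, ‖h j t‖ * (V (j-1) t ^ 2 + V j t ^ 2)) t := by
    intro t
    have hXd : ∀ j, HasDerivAt (X j) (deriv (X j) t) t := fun j =>
      (((hX j).differentiable one_ne_zero) t).hasDerivAt
    have hκd : ∀ j, HasDerivAt (κ j) (deriv (κ j) t) t := fun j =>
      (((hκ j).differentiable one_ne_zero) t).hasDerivAt
    have hh : ∀ j, HasDerivAt (fun s => h j s)
        (deriv (X j) t - deriv (X (j-1)) t) t := by
      intro j
      have : (fun s => h j s) = fun s => X j s - X (j-1) s := funext (hdef j)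
      rw [this]
      exact (hXd j).sub (hXd (j-1))
    have hnorm : ∀ j, HasDerivAt (fun s => ‖h j s‖)
        (‖h j t‖⁻¹ * (inner ℝ (h j t) (deriv (X j) t - deriv (X (j-1)) t) : ℝ)) t :=
      fun j => hasDerivAt_norm_aux (hh j) (hne j t)
    -- per-term derivative of W
    set g : ZMod N → ℝ := fun j =>
      ‖h j t‖⁻¹ * (inner ℝ (h j t) (deriv (X j) t - deriv (X (j-1)) t) : ℝ)
        * (κ (j-1) t * κ (j-1) t + κ j t * κ j t)
      + 2 * (‖h j t‖ * (deriv (κ (j-1)) t * κ (j-1) t + deriv (κ j) t * κ j t)) with hg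
    have hD : HasDerivAt W ((1/4) * ∑ j, g j) t := by
      rw [Wdef]
      exact HasDerivAt.const_mul _ (HasDerivAt.fun_sum (fun j _ => by
        have := (hnorm j).mul (((hκd (j-1)).pow 2).add ((hκd j).pow 2))
        convert this using 1
        show g j = _
        rw [hg]
        norm_num
        ring_nf
        rfl
        rfl))
    -- abbreviations for the sums appearing in the algebra
    set A : ℝ := ∑ j, ‖h j t‖⁻¹
        * (inner ℝ (h j t) (deriv (X j) t - deriv (X (j-1)) t) : ℝ)
        * (κ (j-1) t * κ (j-1) t + κ j t * κ j t) with hA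
    set B : ℝ := ∑ j, ‖h j t‖ * (deriv (κ (j-1)) t * κ (j-1) t + deriv (κ j) t * κ j t)
      with hB
    set C : ℝ := ∑ j, ‖h j t‖⁻¹
        * (inner ℝ (n j t) (deriv (X j) t - deriv (X (j-1)) t) : ℝ)
        * (κ j t - κ (j-1) t) with hC
    set P : ℝ := ∑ j, ‖h j t‖ * (V (j-1) t * (inner ℝ (n j t) (deriv (X (j-1)) t) : ℝ)
        + V j t * (inner ℝ (n j t) (deriv (X j) t) : ℝ)) with hP
    set T : ℝ := ∑ j, ‖h j t‖ * (V (j-1) t ^ 2 + V j t ^ 2) with hT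
    have hsplit : ∑ j, g j = A + 2 * B := by
      rw [hg, hA, hB, Finset.sum_add_distrib, ← Finset.mul_sum]
    -- S3 with ψ = κ · t
    have e3 : (1/2) * B = C - (1/2) * A := by
      have := S3 t (fun j => κ j t)
      simpa [hA, hB, hC] using this
    -- S2 with ω = X' · t
    have e2 : (1/2) * P = -C + (1/4) * A := by
      have h2 := S2 t (fun j => deriv (X j) t)
      have hR2 : (∑ j, ‖h j t‖⁻¹ *
          (inner ℝ (-(κ j t - κ (j-1) t) • n j t
              + ((κ (j-1) t ^ 2 + κ j t ^ 2)/4) • h j t)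
            (deriv (X j) t - deriv (X (j-1)) t) : ℝ)) = -C + (1/4) * A := by
        have hterm : ∀ j : ZMod N, ‖h j t‖⁻¹ *
            (inner ℝ (-(κ j t - κ (j-1) t) • n j t
                + ((κ (j-1) t ^ 2 + κ j t ^ 2)/4) • h j t)
              (deriv (X j) t - deriv (X (j-1)) t) : ℝ)
            = -(‖h j t‖⁻¹ * (inner ℝ (n j t) (deriv (X j) t - deriv (X (j-1)) t) : ℝ)
                  * (κ j t - κ (j-1) t))
              + (1/4) * (‖h j t‖⁻¹
                  * (inner ℝ (h j t) (deriv (X j) t - deriv (X (j-1)) t) : ℝ)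
                  * (κ (j-1) t * κ (j-1) t + κ j t * κ j t)) := by
          intro j
          rw [inner_add_left, real_inner_smul_left, real_inner_smul_left]
          ring
        rw [Finset.sum_congr rfl (fun j _ => hterm j), Finset.sum_add_distrib,
          Finset.sum_neg_distrib, ← Finset.mul_sum, ← hA, ← hC]
      rw [hR2] at h2
      rw [← hP] at h2
      exact h2
    -- S1 with φ = V · t
    have e1 : P = T := by
      have h1 := S1 t (fun j => V j t)
      have hL : (∑ j, ‖h j t‖ * ((inner ℝ (n j t) (deriv (X (j-1)) t) : ℝ) * V (j-1) t
          + (inner ℝ (n j t) (deriv (X j) t) : ℝ) * V j t)) = P := by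
        rw [hP]; exact Finset.sum_congr rfl (fun j _ => by ring)
      have hR : (∑ j, ‖h j t‖ * (V (j-1) t * V (j-1) t + V j t * V j t)) = T := by
        rw [hT]; exact Finset.sum_congr rfl (fun j _ => by ring_nf)
      rw [hL, hR] at h1
      exact h1
    have key : (1/4) * ∑ j, g j = -(1/2) * T := by
      rw [hsplit]; rw [e1] at e2; linarith
    rw [key] at hD
    exact hD
  refine ⟨hpart1, ?_, ?_⟩
  · intro t
    have hnn : (0:ℝ) ≤ ∑ j, ‖h j t‖ * (V (j-1) t ^ 2 + V j t ^ 2) :=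
      Finset.sum_nonneg fun j _ => mul_nonneg (norm_nonneg _) (by positivity)
    nlinarith
  · intro t t' htt
    have hdiff : Differentiable ℝ W := fun s => (hpart1 s).differentiableAt
    have hderiv : ∀ s, deriv W s ≤ 0 := by
      intro s
      rw [(hpart1 s).deriv]
      have hnn : (0:ℝ) ≤ ∑ j, ‖h j s‖ * (V (j-1) s ^ 2 + V j s ^ 2) :=
        Finset.sum_nonneg fun j _ => mul_nonneg (norm_nonneg _) (by positivity)
      nlinarith
    exact antitone_of_deriv_nonpos hdiff hderiv htt
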